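/- For every t > 0 and every z with 0 ≤ z < e^t − 1, the function b ↦ E(z,t;0,b) is differentiable at b = 0 and its derivative equals (1/(2((e^t − 1)² − z²)·√((e^t + 1)² − z²))) · [ (1 − e^{2t} + z²)·F(−1/2, 1/2; 1; ζ) + 2(e^t − 1)·F(1/2, 1/2; 1; ζ) ], where ζ := ((e^t − 1)² − z²)/((e^t + 1)² − z²). In particular, this derivative equals −K0(z,t). -/

import Mathlib

open MeasureTheory Real intervalIntegral

/-- Rising factorial (Pochhammer symbol) `(q)_n = q (q+1) ⋯ (q+n−1)`. -/
noncomputable def risingFactorial (q : ℝ) : ℕ → ℝ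
  | 0 => 1
  | n + 1 => risingFactorial q n * (q + (n : ℝ))

/-- The Gauss hypergeometric function `F(a,b;c;x)` defined by its power series
`∑ ((a)_n (b)_n / ((c)_n n!)) x^n`. -/
noncomputable def hyperF (a b c x : ℝ) : ℝ :=
  ∑' n : ℕ, (risingFactorial a n * risingFactorial b n) /
    (risingFactorial c n * (Nat.factorial n : ℝ)) * x ^ n

/-- The kernel
`E(x,t;0,t₀) = ((e^{t₀}+e^t)² − x²)^{−1/2} F(1/2,1/2;1;((e^t−e^{t₀})²−x²)/((e^t+e^{t₀})²−x²))`. -/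
noncomputable def Eker (x t t₀ : ℝ) : ℝ :=
  ((Real.exp t₀ + Real.exp t) ^ 2 - x ^ 2) ^ (-(1 : ℝ) / 2) *
    hyperF (1 / 2) (1 / 2) 1
      (((Real.exp t - Real.exp t₀) ^ 2 - x ^ 2) / ((Real.exp t + Real.exp t₀) ^ 2 - x ^ 2))

/-- The kernel `K1(z,t) = ((1+e^t)²−z²)^{−1/2} F(1/2,1/2;1;((e^t−1)²−z²)/((e^t+1)²−z²))`. -/
noncomputable def K1 (z t : ℝ) : ℝ :=
  ((1 + Real.exp t) ^ 2 - z ^ 2) ^ (-(1 : ℝ) / 2) *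
    hyperF (1 / 2) (1 / 2) 1
      (((Real.exp t - 1) ^ 2 - z ^ 2) / ((Real.exp t + 1) ^ 2 - z ^ 2))

/-- The kernel `K0(z,t)`. -/
noncomputable def K0 (z t : ℝ) : ℝ :=
  -(1 / (2 * ((Real.exp t - 1) ^ 2 - z ^ 2) * Real.sqrt ((Real.exp t + 1) ^ 2 - z ^ 2))) *
    ((1 - Real.exp (2 * t) + z ^ 2) *
        hyperF (-(1 / 2)) (1 / 2) 1
          (((Real.exp t - 1) ^ 2 - z ^ 2) / ((Real.exp t + 1) ^ 2 - z ^ 2))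
      + 2 * (Real.exp t - 1) *
        hyperF (1 / 2) (1 / 2) 1
          (((Real.exp t - 1) ^ 2 - z ^ 2) / ((Real.exp t + 1) ^ 2 - z ^ 2)))

namespace S7Aux

noncomputable def co (a : ℝ) (n : ℕ) : ℝ :=
  risingFactorial a n * risingFactorial (1/2) n /
    (risingFactorial 1 n * (Nat.factorial n : ℝ))

lemma hyperF_eq (a x : ℝ) : hyperF a (1/2) 1 x = ∑' n : ℕ, co a n * x ^ n := rfl

lemma rf_one (n : ℕ) : risingFactorial 1 n = (Nat.factorial n : ℝ) := by
  induction n with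
  | zero => simp [risingFactorial]
  | succ n ih => rw [risingFactorial, ih, Nat.factorial_succ]; push_cast; ring

lemma rf_half_pos (n : ℕ) : 0 < risingFactorial (1/2) n := by
  induction n with
  | zero => norm_num [risingFactorial]
  | succ n ih => rw [risingFactorial]; positivity

lemma rf_half_le (n : ℕ) : risingFactorial (1/2) n ≤ (Nat.factorial n : ℝ) := by
  induction n with
  | zero => norm_num [risingFactorial]
  | succ n ih =>
    rw [risingFactorial, Nat.factorial_succ]
    push_cast
    have h1 : (0:ℝ) < Nat.factorial n := by positivity
    nlinarith [rf_half_pos n]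

lemma rf_neghalf_abs (n : ℕ) : |risingFactorial (-(1/2)) n| ≤ (Nat.factorial n : ℝ) := by
  induction n with
  | zero => norm_num [risingFactorial]
  | succ n ih =>
    rw [risingFactorial, abs_mul, Nat.factorial_succ]
    push_cast
    have h2 : |(-(1/2) : ℝ) + n| ≤ (n : ℝ) + 1 := by
      rw [abs_le]; constructor <;> [nlinarith [Nat.cast_nonneg (α := ℝ) n];
        nlinarith [Nat.cast_nonneg (α := ℝ) n]]
    have h3 : (0:ℝ) ≤ |risingFactorial (-(1/2)) n| := abs_nonneg _
    nlinarith [(by exact_mod_cast n.factorial_pos : (0:ℝ) < (Nat.factorial n : ℝ))]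

lemma co_abs_le {a : ℝ} (h : ∀ n, |risingFactorial a n| ≤ (Nat.factorial n : ℝ)) (n : ℕ) :
    |co a n| ≤ 1 := by
  have hf : (0:ℝ) < Nat.factorial n := by positivity
  rw [co, rf_one, abs_div, abs_mul, abs_of_pos (rf_half_pos n), abs_of_pos (by positivity :
    (0:ℝ) < (Nat.factorial n : ℝ) * (Nat.factorial n : ℝ))]
  rw [div_le_one (by positivity)]
  exact mul_le_mul (h n) (rf_half_le n) (rf_half_pos n).le (by positivity)

lemma co_half_abs_le (n : ℕ) : |co (1/2) n| ≤ 1 := by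
  apply co_abs_le (fun n => ?_) n
  rw [abs_of_pos (rf_half_pos n)]; exact rf_half_le n

lemma co_neghalf_abs_le (n : ℕ) : |co (-(1/2)) n| ≤ 1 :=
  co_abs_le rf_neghalf_abs n

lemma co_zero (a : ℝ) : co a 0 = 1 := by norm_num [co, risingFactorial]

lemma co_succ (a : ℝ) (n : ℕ) :
    co a (n + 1) * ((n : ℝ) + 1)^2 = co a n * ((a + n) * (1/2 + n)) := by
  have hf : ((Nat.factorial n : ℝ)) ≠ 0 := by positivity
  have hn : ((n:ℝ) + 1) ≠ 0 := by positivity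
  simp only [co, risingFactorial, rf_one, Nat.factorial_succ]
  push_cast
  field_simp
  ring

lemma dc (n : ℕ) : (2*(n:ℝ) - 1) * co (-(1/2)) n = - co (1/2) n := by
  induction n with
  | zero => norm_num [co_zero]
  | succ n ih =>
    have h := co_succ (-(1/2)) n
    have h2 := co_succ (1/2) n
    have hne : ((n:ℝ)+1)^2 ≠ 0 := by positivity
    apply mul_left_cancel₀ hne
    push_cast
    linear_combination (2*(n:ℝ)+1) * h + h2 + ((n:ℝ)+1/2)^2 * ih

lemma keyrec (n : ℕ) :
    (2*(n:ℝ)+3) * co (1/2) (n+1) - co (-(1/2)) (n+1) = (2*(n:ℝ)+1) * co (1/2) n := by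
  have h := co_succ (-(1/2)) n
  have h2 := co_succ (1/2) n
  have hdc := dc n
  have hne : ((n:ℝ)+1)^2 ≠ 0 := by positivity
  apply mul_left_cancel₀ hne
  linear_combination (2*(n:ℝ)+3) * h2 - h - (((n:ℝ)+1/2)/2) * hdc

lemma summable_aux {x : ℝ} (hx : |x| < 1) (p : ℕ → ℝ) (C : ℝ)
    (hp : ∀ n, |p n| ≤ C * ((n:ℝ)+1)) : Summable (fun n => p n * x ^ n) := by
  have hC : 0 ≤ C := by have := hp 0; have := abs_nonneg (p 0); push_cast at this ⊢; nlinarith [hp 0, abs_nonneg (p 0)]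
  have hgeom : Summable (fun n : ℕ => ((n:ℝ)+1) * |x| ^ n) := by
    have h1 : Summable (fun n : ℕ => (n:ℝ) ^ 1 * |x| ^ n) :=
      summable_pow_mul_geometric_of_norm_lt_one 1 (by rwa [Real.norm_eq_abs, abs_abs])
    have h2 : Summable (fun n : ℕ => |x| ^ n) :=
      summable_geometric_of_lt_one (abs_nonneg x) hx
    simpa [add_mul, pow_one] using h1.add h2
  apply Summable.of_norm_bounded (g := fun n : ℕ => C * (((n:ℝ)+1) * |x| ^ n)) (hgeom.mul_left C)
  intro n
  rw [Real.norm_eq_abs, abs_mul, abs_pow]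
  calc |p n| * |x| ^ n ≤ (C * ((n:ℝ)+1)) * |x| ^ n := by
        apply mul_le_mul_of_nonneg_right (hp n) (by positivity)
    _ = C * (((n:ℝ)+1) * |x| ^ n) := by ring

lemma hasDerivAt_ps (c : ℕ → ℝ) (hc : ∀ n, |c n| ≤ 1) {x : ℝ} (hx : |x| < 1) :
    HasDerivAt (fun y => ∑' n : ℕ, c n * y ^ n)
      (∑' n : ℕ, c n * ((n:ℝ) * x ^ (n-1))) x := by
  set r : ℝ := (1 + |x|)/2 with hr
  have hr0 : 0 < r := by positivity
  have hxr : |x| < r := by rw [hr]; linarith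
  have hr1 : r < 1 := by rw [hr]; linarith
  have hu : Summable (fun n : ℕ => (n:ℝ) * r ^ (n-1)) := by
    rw [← summable_nat_add_iff 1]
    have h1 : Summable (fun n : ℕ => ((n:ℝ)+1) * r ^ n) := by
      have ha : Summable (fun n : ℕ => (n:ℝ) ^ 1 * r ^ n) :=
        summable_pow_mul_geometric_of_norm_lt_one 1
          (by rw [Real.norm_eq_abs, abs_of_pos hr0]; exact hr1)
      have hb : Summable (fun n : ℕ => r ^ n) := summable_geometric_of_lt_one hr0.le hr1
      simpa [add_mul, pow_one] using ha.add hb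
    apply h1.congr
    intro n
    push_cast
    ring_nf
  refine hasDerivAt_tsum_of_isPreconnected (y₀ := x) hu Metric.isOpen_ball
    (convex_ball (0:ℝ) r).isPreconnected
    (fun n y _ => (hasDerivAt_pow n y).const_mul (c n)) ?_ ?_ ?_ ?_
  · intro n y hy
    rw [Metric.mem_ball, Real.dist_eq, sub_zero] at hy
    rw [Real.norm_eq_abs, abs_mul, abs_mul, abs_pow]
    have h1 : |c n| * (|(n:ℝ)| * |y| ^ (n-1)) ≤ 1 * (|(n:ℝ)| * r ^ (n-1)) := by
      apply mul_le_mul (hc n) _ (by positivity) zero_le_one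
      exact mul_le_mul_of_nonneg_left (pow_le_pow_left₀ (abs_nonneg y) hy.le _) (abs_nonneg _)
    simpa [abs_of_nonneg (Nat.cast_nonneg (α := ℝ) n)] using h1
  · rw [Metric.mem_ball, Real.dist_eq, sub_zero]; exact hxr
  · exact summable_aux hx c 1 (fun n => by
      have := hc n; nlinarith [Nat.cast_nonneg (α := ℝ) n, abs_nonneg (c n)])
  · rw [Metric.mem_ball, Real.dist_eq, sub_zero]; exact hxr


lemma hasDerivAt_hyperF {x : ℝ} (hx0 : 0 < x) (hx1 : x < 1) :
    HasDerivAt (fun y => hyperF (1/2) (1/2) 1 y)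
      ((hyperF (-(1/2)) (1/2) 1 x - (1-x) * hyperF (1/2) (1/2) 1 x) / (2*x*(1-x))) x := by
  have habs : |x| < 1 := by rw [abs_of_pos hx0]; exact hx1
  have hxle : |x| ≤ 1 := habs.le
  have hD := hasDerivAt_ps (co (1/2)) co_half_abs_le habs
  have hfun : (fun y => hyperF (1/2) (1/2) 1 y) = fun y => ∑' n : ℕ, co (1/2) n * y ^ n := by
    funext y; exact hyperF_eq _ y
  rw [hfun]
  convert hD using 1
  rw [hyperF_eq, hyperF_eq]
  set D := ∑' n : ℕ, co (1/2) n * ((n:ℝ) * x ^ (n-1)) with hDdef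
  -- summability facts
  have sc : Summable (fun n : ℕ => co (1/2) n * x ^ n) :=
    summable_aux habs _ 1 (fun n => by
      nlinarith [co_half_abs_le n, Nat.cast_nonneg (α := ℝ) n, abs_nonneg (co (1/2) n)])
  have sd : Summable (fun n : ℕ => co (-(1/2)) n * x ^ n) :=
    summable_aux habs _ 1 (fun n => by
      nlinarith [co_neghalf_abs_le n, Nat.cast_nonneg (α := ℝ) n, abs_nonneg (co (-(1/2)) n)])
  have sa : Summable (fun n : ℕ => (2*(n:ℝ)*co (1/2) n) * x ^ n) :=
    summable_aux habs _ 2 (fun n => by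
      rw [abs_mul, abs_mul, abs_of_nonneg (by norm_num : (0:ℝ) ≤ 2),
        abs_of_nonneg (Nat.cast_nonneg (α := ℝ) n)]
      nlinarith [co_half_abs_le n, Nat.cast_nonneg (α := ℝ) n, abs_nonneg (co (1/2) n)])
  have sb : Summable (fun n : ℕ => (2*(n:ℝ)*co (1/2) n*x) * x ^ n) :=
    summable_aux habs _ 2 (fun n => by
      rw [abs_mul, abs_mul, abs_mul, abs_of_nonneg (by norm_num : (0:ℝ) ≤ 2),
        abs_of_nonneg (Nat.cast_nonneg (α := ℝ) n)]
      calc 2*(n:ℝ) * |co (1/2) n| * |x| ≤ 2*(n:ℝ)*1*1 := by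
            gcongr <;> first | exact co_half_abs_le n | exact hxle
        _ ≤ 2*((n:ℝ)+1) := by linarith)
  have scx : Summable (fun n : ℕ => (co (1/2) n*x) * x ^ n) :=
    summable_aux habs _ 1 (fun n => by
      rw [abs_mul]
      nlinarith [co_half_abs_le n, Nat.cast_nonneg (α := ℝ) n, abs_nonneg (co (1/2) n),
        abs_nonneg x])
  have sf : Summable (fun n : ℕ => ((2*(n:ℝ)+1)*co (1/2) n - co (-(1/2)) n) * x ^ n) :=
    summable_aux habs _ 4 (fun n => by
      have h1 : |(2*(n:ℝ)+1)*co (1/2) n - co (-(1/2)) n| ≤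
          |(2*(n:ℝ)+1)*co (1/2) n| + |co (-(1/2)) n| := abs_sub _ _
      rw [abs_mul, abs_of_nonneg (by positivity : (0:ℝ) ≤ 2*(n:ℝ)+1)] at h1
      nlinarith [co_half_abs_le n, co_neghalf_abs_le n, Nat.cast_nonneg (α := ℝ) n,
        abs_nonneg (co (1/2) n), abs_nonneg (co (-(1/2)) n)])
  have sg : Summable (fun n : ℕ => ((2*(n:ℝ)+1)*co (1/2) n*x) * x ^ n) :=
    summable_aux habs _ 3 (fun n => by
      rw [abs_mul, abs_mul, abs_of_nonneg (by positivity : (0:ℝ) ≤ 2*(n:ℝ)+1)]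
      calc (2*(n:ℝ)+1) * |co (1/2) n| * |x| ≤ (2*(n:ℝ)+1)*1*1 := by
            gcongr <;> first | exact co_half_abs_le n | exact hxle
        _ ≤ 3*((n:ℝ)+1) := by linarith)
  -- termwise identities
  have e1 : 2*x*D = ∑' n : ℕ, (2*(n:ℝ)*co (1/2) n) * x ^ n := by
    rw [hDdef, ← tsum_mul_left]
    refine tsum_congr fun n => ?_
    cases n with
    | zero => norm_num
    | succ m => rw [Nat.succ_sub_one, pow_succ]; push_cast; ring
  have e2 : 2*x^2*D = ∑' n : ℕ, (2*(n:ℝ)*co (1/2) n*x) * x ^ n := by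
    rw [hDdef, ← tsum_mul_left]
    refine tsum_congr fun n => ?_
    cases n with
    | zero => norm_num
    | succ m => rw [Nat.succ_sub_one, pow_succ]; push_cast; ring
  have e3 : x * (∑' n : ℕ, co (1/2) n * x ^ n) = ∑' n : ℕ, (co (1/2) n*x) * x ^ n := by
    rw [← tsum_mul_left]
    exact tsum_congr fun n => by ring
  have h1 : (∑' n : ℕ, ((2*(n:ℝ)+1)*co (1/2) n - co (-(1/2)) n) * x ^ n)
      = (∑' n : ℕ, (2*(n:ℝ)*co (1/2) n) * x ^ n) + (∑' n : ℕ, co (1/2) n * x ^ n)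
        - (∑' n : ℕ, co (-(1/2)) n * x ^ n) := by
    rw [← Summable.tsum_add sa sc, ← Summable.tsum_sub (sa.add sc) sd]
    exact tsum_congr fun n => by ring
  have h2 : (∑' n : ℕ, ((2*(n:ℝ)+1)*co (1/2) n*x) * x ^ n)
      = (∑' n : ℕ, (2*(n:ℝ)*co (1/2) n*x) * x ^ n) + (∑' n : ℕ, (co (1/2) n*x) * x ^ n) := by
    rw [← Summable.tsum_add sb scx]
    exact tsum_congr fun n => by ring
  have h3 : (∑' n : ℕ, ((2*(n:ℝ)+1)*co (1/2) n - co (-(1/2)) n) * x ^ n)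
      = ∑' n : ℕ, ((2*(n:ℝ)+1)*co (1/2) n*x) * x ^ n := by
    rw [Summable.tsum_eq_zero_add sf]
    have hz : ((2*((0:ℕ):ℝ)+1)*co (1/2) 0 - co (-(1/2)) 0) * x ^ (0:ℕ) = 0 := by
      norm_num [co_zero]
    rw [hz, zero_add]
    refine tsum_congr fun n => ?_
    have hk := keyrec n
    push_cast
    rw [pow_succ]
    linear_combination (x^n * x) * hk
  have h1x : 0 < 1 - x := by linarith
  have hne : 2*x*(1-x) ≠ 0 := by positivity
  rw [div_eq_iff hne]
  linear_combination -e1 + e2 + e3 + h1 - h2 - h3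


end S7Aux

theorem statement7 (t z : ℝ) (ht : 0 < t) (hz : 0 ≤ z) (hz' : z < Real.exp t - 1) :
    HasDerivAt (fun b => Eker z t b)
      (1 / (2 * ((Real.exp t - 1) ^ 2 - z ^ 2) * Real.sqrt ((Real.exp t + 1) ^ 2 - z ^ 2)) *
        ((1 - Real.exp (2 * t) + z ^ 2) *
            hyperF (-(1 / 2)) (1 / 2) 1
              (((Real.exp t - 1) ^ 2 - z ^ 2) / ((Real.exp t + 1) ^ 2 - z ^ 2))
          + 2 * (Real.exp t - 1) *
            hyperF (1 / 2) (1 / 2) 1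
              (((Real.exp t - 1) ^ 2 - z ^ 2) / ((Real.exp t + 1) ^ 2 - z ^ 2))))
      0 ∧
    1 / (2 * ((Real.exp t - 1) ^ 2 - z ^ 2) * Real.sqrt ((Real.exp t + 1) ^ 2 - z ^ 2)) *
        ((1 - Real.exp (2 * t) + z ^ 2) *
            hyperF (-(1 / 2)) (1 / 2) 1
              (((Real.exp t - 1) ^ 2 - z ^ 2) / ((Real.exp t + 1) ^ 2 - z ^ 2))
          + 2 * (Real.exp t - 1) *
            hyperF (1 / 2) (1 / 2) 1
              (((Real.exp t - 1) ^ 2 - z ^ 2) / ((Real.exp t + 1) ^ 2 - z ^ 2)))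
      = -K0 z t := by
  have hu1 : 1 < Real.exp t := by
    rw [← Real.exp_zero]; exact Real.exp_lt_exp.2 ht
  have hzsq : z ^ 2 < (Real.exp t - 1) ^ 2 := by nlinarith
  have hApos : 0 < (Real.exp t + 1) ^ 2 - z ^ 2 := by nlinarith
  have hBpos : 0 < (Real.exp t - 1) ^ 2 - z ^ 2 := by nlinarith
  have hBA : ((Real.exp t - 1) ^ 2 - z ^ 2) < ((Real.exp t + 1) ^ 2 - z ^ 2) := by
    nlinarith [Real.exp_pos t]
  constructor
  · -- derivative part
    have hexp1 : HasDerivAt (fun b : ℝ => Real.exp b) 1 0 := by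
      simpa [Real.exp_zero] using Real.hasDerivAt_exp 0
    have hA : HasDerivAt (fun b => (Real.exp b + Real.exp t) ^ 2 - z ^ 2)
        (2 * (Real.exp t + 1)) 0 := by
      have h := ((hexp1.add_const (Real.exp t)).pow 2).sub_const (z ^ 2)
      convert h using 1 <;> try with_reducible_and_instances rfl
      norm_num [Real.exp_zero]
      try ring
    have hN : HasDerivAt (fun b => (Real.exp t - Real.exp b) ^ 2 - z ^ 2)
        (-(2 * (Real.exp t - 1))) 0 := by
      have h := (((hasDerivAt_const 0 (Real.exp t)).sub hexp1).pow 2).sub_const (z ^ 2)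
      convert h using 1 <;> try with_reducible_and_instances rfl
      norm_num [Real.exp_zero]
      try ring
    have hDen : HasDerivAt (fun b => (Real.exp t + Real.exp b) ^ 2 - z ^ 2)
        (2 * (Real.exp t + 1)) 0 := by
      have h := (((hasDerivAt_const 0 (Real.exp t)).add hexp1).pow 2).sub_const (z ^ 2)
      convert h using 1 <;> try with_reducible_and_instances rfl
      norm_num [Real.exp_zero]
      try ring
    have hzeta : HasDerivAt
        (fun b => ((Real.exp t - Real.exp b) ^ 2 - z ^ 2) / ((Real.exp t + Real.exp b) ^ 2 - z ^ 2))
        ((-(2 * (Real.exp t - 1)) * ((Real.exp t + 1) ^ 2 - z ^ 2)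
            - ((Real.exp t - 1) ^ 2 - z ^ 2) * (2 * (Real.exp t + 1)))
          / ((Real.exp t + 1) ^ 2 - z ^ 2) ^ 2) 0 := by
      have hne : (Real.exp t + Real.exp 0) ^ 2 - z ^ 2 ≠ 0 := by
        rw [Real.exp_zero]; exact hApos.ne'
      have h := hN.div hDen hne
      convert h using 1 <;> try with_reducible_and_instances rfl
      rw [Real.exp_zero]
    have h0 : 0 < ((Real.exp t - 1) ^ 2 - z ^ 2) / ((Real.exp t + 1) ^ 2 - z ^ 2) :=
      div_pos hBpos hApos
    have h1 : ((Real.exp t - 1) ^ 2 - z ^ 2) / ((Real.exp t + 1) ^ 2 - z ^ 2) < 1 :=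
      (div_lt_one hApos).2 hBA
    have hHyp := S7Aux.hasDerivAt_hyperF h0 h1
    have hHyp' : HasDerivAt (fun y => hyperF (1/2) (1/2) 1 y)
        ((hyperF (-(1/2)) (1/2) 1
            (((Real.exp t - 1) ^ 2 - z ^ 2) / ((Real.exp t + 1) ^ 2 - z ^ 2))
          - (1 - ((Real.exp t - 1) ^ 2 - z ^ 2) / ((Real.exp t + 1) ^ 2 - z ^ 2)) *
            hyperF (1/2) (1/2) 1
              (((Real.exp t - 1) ^ 2 - z ^ 2) / ((Real.exp t + 1) ^ 2 - z ^ 2)))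
          / (2 * (((Real.exp t - 1) ^ 2 - z ^ 2) / ((Real.exp t + 1) ^ 2 - z ^ 2))
            * (1 - ((Real.exp t - 1) ^ 2 - z ^ 2) / ((Real.exp t + 1) ^ 2 - z ^ 2))))
        (((Real.exp t - Real.exp 0) ^ 2 - z ^ 2) / ((Real.exp t + Real.exp 0) ^ 2 - z ^ 2)) := by
      rw [Real.exp_zero]
      convert hHyp using 2 <;> ring
    have hcomp := hHyp'.comp 0 hzeta
    have hrpow : HasDerivAt (fun b => ((Real.exp b + Real.exp t) ^ 2 - z ^ 2) ^ (-(1:ℝ)/2))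
        ((-(1:ℝ)/2) * ((Real.exp t + 1) ^ 2 - z ^ 2) ^ ((-(1:ℝ)/2) - 1) * (2 * (Real.exp t + 1)))
        0 := by
      have hne : (fun b => (Real.exp b + Real.exp t) ^ 2 - z ^ 2) 0 ≠ 0 := by
        simp only [Real.exp_zero]
        intro hcon; nlinarith
      have h := hA.rpow_const (p := -(1:ℝ)/2) (Or.inl hne)
      convert h using 1 <;> try with_reducible_and_instances rfl
      simp only [Real.exp_zero]
      ring_nf
    have final := hrpow.mul hcomp
    have hfuneq : (fun b => Eker z t b) =
        (fun b => ((Real.exp b + Real.exp t) ^ 2 - z ^ 2) ^ (-(1:ℝ)/2) *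
          ((fun y => hyperF (1/2) (1/2) 1 y) ∘
            (fun b => ((Real.exp t - Real.exp b) ^ 2 - z ^ 2) /
              ((Real.exp t + Real.exp b) ^ 2 - z ^ 2))) b) := rfl
    rw [hfuneq]
    convert final using 1 <;> try with_reducible_and_instances rfl
    simp only [Function.comp_apply, Real.exp_zero]
    rw [show ((1:ℝ) + Real.exp t) ^ 2 - z ^ 2 = (Real.exp t + 1) ^ 2 - z ^ 2 by ring]
    -- now pure algebra
    rw [show Real.exp (2*t) = Real.exp t * Real.exp t by rw [two_mul, Real.exp_add]]
    set GG := hyperF (-(1/2)) (1/2) 1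
      (((Real.exp t - 1) ^ 2 - z ^ 2) / ((Real.exp t + 1) ^ 2 - z ^ 2)) with hGG
    set HH := hyperF (1/2) (1/2) 1
      (((Real.exp t - 1) ^ 2 - z ^ 2) / ((Real.exp t + 1) ^ 2 - z ^ 2)) with hHH
    set AA := (Real.exp t + 1) ^ 2 - z ^ 2 with hAAdef
    set BB := (Real.exp t - 1) ^ 2 - z ^ 2 with hBBdef
    have hs0 : 0 < Real.sqrt AA := Real.sqrt_pos.2 hApos
    have hAs : AA = Real.sqrt AA ^ 2 := (Real.sq_sqrt hApos.le).symm
    have hr1 : AA ^ (-(1:ℝ)/2) = (Real.sqrt AA)⁻¹ := by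
      rw [Real.sqrt_eq_rpow, ← Real.rpow_neg hApos.le]
      norm_num
    have hr2 : AA ^ ((-(1:ℝ)/2) - 1) = (Real.sqrt AA)⁻¹ * AA⁻¹ := by
      rw [Real.rpow_sub hApos, Real.rpow_one, hr1, div_eq_mul_inv]
    rw [hr1, hr2]
    set s := Real.sqrt AA with hs
    have hBB : BB = s ^ 2 - 4 * Real.exp t := by
      rw [hBBdef, ← hAs, hAAdef]; ring
    have hz2 : z ^ 2 = (Real.exp t + 1) ^ 2 - s ^ 2 := by
      rw [← hAs, hAAdef]; ring
    have hBne : s ^ 2 - 4 * Real.exp t ≠ 0 := by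
      rw [← hBB]; exact hBpos.ne'
    have hAne : AA ≠ 0 := hApos.ne'
    rw [hBB, hz2, hAs]
    have hsne : s ≠ 0 := hs0.ne'
    have hexpne : Real.exp t ≠ 0 := (Real.exp_pos t).ne'
    field_simp
    ring
  · -- second part
    unfold K0
    ring
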